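/- Let f_1,…,f_L be an orthonormal family in 𝔽^d, let z_1,…,z_L ∈ 𝔽 satisfy |z_l| ≤ 1/2 for each l, and let h ∈ 𝔽^d be a unit vector with ⟨h, f_l⟩ = 0 for every l. For t ∈ (−1, 1) let A(t) ∈ 𝔽^{d×L} have l-th column (1 − t²|z_l|²)^{1/2} f_l + t z_l h, let F ∈ 𝔽^{d×L} have l-th column f_l, and let H ∈ 𝔽^{d×L} have l-th column z_l h. Then the matrix-valued curve t ↦ P(t) = A(t)(A(t)*A(t))^{−1}A(t)* (the orthogonal projection onto the range of A(t)) is differentiable at t = 0 with derivative P′(0) = H F* + F H*. -/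

import Mathlib

open scoped BigOperators InnerProductSpace Matrix

attribute [local instance] Matrix.normedAddCommGroup Matrix.normedSpace

/-- The matrix `A(t)` whose `l`-th column is `(1 - t²|z_l|²)^{1/2} f_l + t z_l h`. -/
noncomputable def Amat {𝕜 : Type*} [RCLike 𝕜] {d L : ℕ}
    (f : Fin L → EuclideanSpace 𝕜 (Fin d)) (z : Fin L → 𝕜)
    (h : EuclideanSpace 𝕜 (Fin d)) (t : ℝ) : Matrix (Fin d) (Fin L) 𝕜 :=
  Matrix.of fun i l =>
    (Real.sqrt (1 - t ^ 2 * ‖z l‖ ^ 2) : 𝕜) * f l i + (t : 𝕜) * z l * h i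

/-- The orthogonal projection onto the range of `A(t)`:
`P(t) = A(t) (A(t)* A(t))⁻¹ A(t)*`. -/
noncomputable def Pmat {𝕜 : Type*} [RCLike 𝕜] {d L : ℕ}
    (f : Fin L → EuclideanSpace 𝕜 (Fin d)) (z : Fin L → 𝕜)
    (h : EuclideanSpace 𝕜 (Fin d)) (t : ℝ) : Matrix (Fin d) (Fin d) 𝕜 :=
  Amat f z h t * ((Amat f z h t)ᴴ * Amat f z h t)⁻¹ * (Amat f z h t)ᴴ

section Aux
variable {𝕜 : Type*} [RCLike 𝕜] {d L : ℕ}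

lemma hasDerivAt_matrix {m n : ℕ} {A : ℝ → Matrix (Fin m) (Fin n) 𝕜}
    {A' : Matrix (Fin m) (Fin n) 𝕜} {t : ℝ} :
    HasDerivAt A A' t ↔ ∀ i j, HasDerivAt (fun s => A s i j) (A' i j) t :=
  hasDerivAt_pi.trans (forall_congr' fun _ => hasDerivAt_pi)

lemma HasDerivAt.matmul {a b c : ℕ} {A : ℝ → Matrix (Fin a) (Fin b) 𝕜}
    {B : ℝ → Matrix (Fin b) (Fin c) 𝕜} {A' B'} {t : ℝ}
    (hA : HasDerivAt A A' t) (hB : HasDerivAt B B' t) :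
    HasDerivAt (fun s => A s * B s) (A' * B t + A t * B') t := by
  rw [hasDerivAt_matrix] at hA hB ⊢
  intro i j
  simp only [Matrix.mul_apply, Matrix.add_apply, ← Finset.sum_add_distrib]
  exact HasDerivAt.fun_sum fun k _ => (hA i k).mul (hB k j)

lemma HasDerivAt.matrix_conjTranspose {a b : ℕ} {A : ℝ → Matrix (Fin a) (Fin b) 𝕜}
    {A'} {t : ℝ} (hA : HasDerivAt A A' t) :
    HasDerivAt (fun s => (A s)ᴴ) A'ᴴ t := by
  rw [hasDerivAt_matrix] at hA ⊢
  intro i j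
  have := (RCLike.conjCLE (K := 𝕜)).toContinuousLinearMap.hasFDerivAt.comp_hasDerivAt t (hA j i)
  simpa [Matrix.conjTranspose_apply, Function.comp_def] using this

lemma gram_eq (f : Fin L → EuclideanSpace 𝕜 (Fin d)) (hf : Orthonormal 𝕜 f)
    (z : Fin L → 𝕜) (h : EuclideanSpace 𝕜 (Fin d)) (hh : ‖h‖ = 1)
    (hhf : ∀ l, ⟪h, f l⟫_𝕜 = 0) (s : ℝ) (hs : ∀ l, s ^ 2 * ‖z l‖ ^ 2 ≤ 1) :
    (Amat f z h s)ᴴ * Amat f z h s =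
      1 + s ^ 2 • Matrix.of (fun l m : Fin L =>
        if l = m then 0 else (starRingEnd 𝕜) (z l) * z m) := by
  set a : Fin L → EuclideanSpace 𝕜 (Fin d) := fun l =>
    ((Real.sqrt (1 - s ^ 2 * ‖z l‖ ^ 2) : ℝ) : 𝕜) • f l + ((s : 𝕜) * z l) • h with ha
  ext l m
  have hentry : ((Amat f z h s)ᴴ * Amat f z h s) l m = ⟪a l, a m⟫_𝕜 := by
    simp [Matrix.mul_apply, Matrix.conjTranspose_apply, PiLp.inner_apply, RCLike.inner_apply,
      ha, PiLp.add_apply, PiLp.smul_apply, smul_eq_mul, Amat, mul_assoc,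
      RCLike.real_smul_eq_coe_mul, map_mul, RCLike.conj_ofReal]
    exact Finset.sum_congr rfl fun _ _ => mul_comm _ _
  rw [hentry, ha]
  have hfh : ∀ l, ⟪f l, h⟫_𝕜 = 0 := by
    intro l; rw [← inner_conj_symm, hhf l, map_zero]
  have hff := orthonormal_iff_ite.mp hf
  have hhh : ⟪h, h⟫_𝕜 = 1 := by
    rw [@inner_self_eq_norm_sq_to_K 𝕜, hh]; norm_num
  simp only [inner_add_add_self, inner_add_left, inner_add_right, inner_smul_left,
    inner_smul_right, hff, hfh, hhf, hhh, RCLike.conj_ofReal, map_mul,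
    mul_zero, zero_mul, mul_one, add_zero, zero_add, mul_ite, ite_mul]
  simp only [Matrix.add_apply, Matrix.smul_apply, Matrix.one_apply, Matrix.of_apply,
    RCLike.conj_ofReal]
  rcases eq_or_ne l m with rfl | hlm
  · simp only [if_pos rfl]
    have h1 : ((Real.sqrt (1 - s ^ 2 * ‖z l‖ ^ 2) : ℝ) : 𝕜)
          * ((Real.sqrt (1 - s ^ 2 * ‖z l‖ ^ 2) : ℝ) : 𝕜)
        = 1 - (s ^ 2 * ‖z l‖ ^ 2 : ℝ) := by
      norm_cast
      exact_mod_cast Real.mul_self_sqrt (by linarith [hs l])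
    rw [h1]
    simp only [if_true, smul_zero, add_zero]
    have h3 : (z l) * (starRingEnd 𝕜) (z l) = ((‖z l‖ ^ 2 : ℝ) : 𝕜) := by
      rw [RCLike.mul_conj]; norm_cast
    push_cast at h3 ⊢
    linear_combination ((s : 𝕜)) ^ 2 * h3
  · simp only [if_neg hlm]
    rw [RCLike.real_smul_eq_coe_mul]
    push_cast
    ring

/-- Derivative of `A` at `0` is the matrix with columns `z_l h`. -/
lemma hasDerivAt_Amat (f : Fin L → EuclideanSpace 𝕜 (Fin d)) (z : Fin L → 𝕜)
    (h : EuclideanSpace 𝕜 (Fin d)) :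
    HasDerivAt (fun s => Amat f z h s) (Matrix.of fun i l => z l * h i) 0 := by
  rw [hasDerivAt_matrix]
  intro i l
  have h1 : HasDerivAt (fun s : ℝ => 1 - s ^ 2 * ‖z l‖ ^ 2) 0 0 := by
    simpa using ((hasDerivAt_pow 2 (0 : ℝ)).mul_const (‖z l‖ ^ 2)).const_sub 1
  have h2 : HasDerivAt (fun s : ℝ => Real.sqrt (1 - s ^ 2 * ‖z l‖ ^ 2)) 0 0 := by
    have := (Real.hasDerivAt_sqrt
      (by norm_num : (1 : ℝ) - (0 : ℝ) ^ 2 * ‖z l‖ ^ 2 ≠ 0)).comp 0 h1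
    simpa [Function.comp_def] using this
  have h3 : HasDerivAt (fun s : ℝ => ((Real.sqrt (1 - s ^ 2 * ‖z l‖ ^ 2) : ℝ) : 𝕜)) 0 0 := by
    have := (RCLike.ofRealCLM (K := 𝕜)).hasFDerivAt.comp_hasDerivAt 0 h2
    simpa [Function.comp_def] using this
  have h4 : HasDerivAt (fun s : ℝ => ((s : ℝ) : 𝕜)) 1 0 := by
    have := (RCLike.ofRealCLM (K := 𝕜)).hasFDerivAt.comp_hasDerivAt 0 (hasDerivAt_id (0 : ℝ))
    simpa using this
  have := (h3.mul_const (f l i)).add (((h4.mul_const (z l)).mul_const (h i)))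
  simpa [Amat, Pi.add_def] using this

end Aux

theorem stmt6 {𝕜 : Type*} [RCLike 𝕜] {d L : ℕ}
    (f : Fin L → EuclideanSpace 𝕜 (Fin d)) (hf : Orthonormal 𝕜 f)
    (z : Fin L → 𝕜) (hz : ∀ l, ‖z l‖ ≤ 1 / 2)
    (h : EuclideanSpace 𝕜 (Fin d)) (hh : ‖h‖ = 1)
    (hhf : ∀ l, ⟪h, f l⟫_𝕜 = 0)
    (F H : Matrix (Fin d) (Fin L) 𝕜)
    (hF : F = Matrix.of fun i l => f l i)
    (hH : H = Matrix.of fun i l => z l * h i) :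
    HasDerivAt (fun t : ℝ => Pmat f z h t) (H * Fᴴ + F * Hᴴ) 0 := by
  classical
  set K : Matrix (Fin L) (Fin L) 𝕜 := Matrix.of (fun l m : Fin L =>
    if l = m then 0 else (starRingEnd 𝕜) (z l) * z m) with hK
  set G : ℝ → Matrix (Fin L) (Fin L) 𝕜 := fun s => 1 + s ^ 2 • K with hG
  -- basic facts
  have hzsq : ∀ (s : ℝ), |s| ≤ 1 → ∀ l, s ^ 2 * ‖z l‖ ^ 2 ≤ 1 := by
    intro s hs l
    have h1 : s ^ 2 ≤ 1 := by
      have := abs_nonneg s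
      nlinarith [sq_abs s]
    have h2 : ‖z l‖ ^ 2 ≤ 1 := by
      have := hz l
      have := norm_nonneg (z l)
      nlinarith
    nlinarith [sq_nonneg s, sq_nonneg (‖z l‖)]
  have hgramEv : ∀ᶠ s in nhds (0 : ℝ), (Amat f z h s)ᴴ * Amat f z h s = G s := by
    filter_upwards [Metric.ball_mem_nhds (0 : ℝ) one_pos] with s hs
    have : |s| ≤ 1 := le_of_lt (by simpa [Real.dist_eq] using hs)
    exact gram_eq f hf z h hh hhf s (hzsq s this)
  have hG0 : G 0 = 1 := by simp [hG]
  have hgram0 : (Amat f z h 0)ᴴ * Amat f z h 0 = 1 := by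
    rw [gram_eq f hf z h hh hhf 0 (hzsq 0 (by norm_num))]; simp
  have hA0 : Amat f z h 0 = F := by
    ext i l
    simp [Amat, hF]
  -- continuity of s ↦ (G s)⁻¹
  have hGcont : Continuous G := by
    apply continuous_const.add
    exact (continuous_pow 2).smul continuous_const
  have hdetcont : ContinuousAt (fun s => (G s).det) 0 := (hGcont.matrix_det).continuousAt
  have hdet0 : (G 0).det = 1 := by rw [hG0, Matrix.det_one]
  have hdetne : ∀ᶠ s in nhds (0 : ℝ), (G s).det ≠ 0 := by
    have : (fun s => (G s).det) 0 ≠ 0 := by simp [hdet0]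
    exact hdetcont.eventually_ne this
  have hinvcont : ContinuousAt (fun s => (G s)⁻¹) 0 := by
    have hri : ContinuousAt (Ring.inverse : 𝕜 → 𝕜) ((G 0).det) := by
      rw [Ring.inverse_eq_inv']
      exact continuousAt_inv₀ (by rw [hdet0]; norm_num)
    exact (continuousAt_matrix_inv (G 0) hri).comp hGcont.continuousAt
  -- derivative of s ↦ (G s)⁻¹ at 0 is 0
  have hGinv : HasDerivAt (fun s => (G s)⁻¹) 0 0 := by
    refine hasDerivAt_iff_tendsto_slope.mpr ?_
    have hslope : (fun s => (-s) • ((G s)⁻¹ * K)) =ᶠ[nhdsWithin (0 : ℝ) {(0 : ℝ)}ᶜ]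
        slope (fun s => (G s)⁻¹) 0 := by
      have hd2 : ∀ᶠ s in nhdsWithin (0 : ℝ) {(0 : ℝ)}ᶜ, (G s).det ≠ 0 :=
        nhdsWithin_le_nhds hdetne
      filter_upwards [hd2, self_mem_nhdsWithin] with s hds (hs0 : s ≠ 0)
      have hgi : (G s)⁻¹ * G s = 1 := Matrix.nonsing_inv_mul _ (Ne.isUnit hds)
      have hsub : (G s)⁻¹ - 1 = -(s ^ 2 • ((G s)⁻¹ * K)) := by
        have hexp : (G s)⁻¹ * G s = (G s)⁻¹ + s ^ 2 • ((G s)⁻¹ * K) := by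
          rw [hG]
          simp [Matrix.mul_add, Matrix.mul_smul]
        rw [hexp] at hgi
        rw [← hgi]
        abel
      have hGinv0 : (fun s => (G s)⁻¹) 0 = 1 := by
        simp [hG0, inv_one]
      simp only [slope_def_module, sub_zero]
      rw [show (G 0)⁻¹ = 1 by rw [hG0, inv_one]]
      rw [hsub, smul_neg, smul_smul]
      rw [show s⁻¹ * s ^ 2 = s by field_simp]
      rw [neg_smul]
    apply Filter.Tendsto.congr' hslope
    have hcont2 : ContinuousAt (fun s => (G s)⁻¹ * K) 0 :=
      (Continuous.matrix_mul continuous_id continuous_const).continuousAt.comp hinvcont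
    have : Filter.Tendsto (fun s : ℝ => (-s) • ((G s)⁻¹ * K)) (nhds 0)
        (nhds ((-(0 : ℝ)) • ((G 0)⁻¹ * K))) :=
      ((continuous_neg.continuousAt : ContinuousAt (fun s : ℝ => -s) 0).smul hcont2)
    have h0 : ((-(0 : ℝ)) • ((G 0)⁻¹ * K)) = 0 := by simp
    rw [h0] at this
    exact this.mono_left nhdsWithin_le_nhds
  -- derivative of q s = ((A s)ᴴ A s)⁻¹
  have hq : HasDerivAt (fun s => ((Amat f z h s)ᴴ * Amat f z h s)⁻¹) 0 0 := by
    apply hGinv.congr_of_eventuallyEq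
    filter_upwards [hgramEv] with s hs
    rw [hs]
  have hA : HasDerivAt (fun s => Amat f z h s) H 0 := by
    rw [hH]; exact hasDerivAt_Amat f z h
  have hAH : HasDerivAt (fun s => (Amat f z h s)ᴴ) Hᴴ 0 := hA.matrix_conjTranspose
  have hP := (hA.matmul hq).matmul hAH
  have : Pmat f z h = fun s => (Amat f z h s * ((Amat f z h s)ᴴ * Amat f z h s)⁻¹)
      * (Amat f z h s)ᴴ := by
    funext s; rw [Pmat]
  rw [this]
  convert hP using 1
  rw [hgram0, hA0, inv_one]
  simp [Matrix.mul_one, Matrix.mul_zero, Matrix.add_mul]
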